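/- arXiv:1305.0595 — 4 statements merged into one kernel-verified Lean document; each statement's English description precedes it below -/
import Mathlib

section
/- Let L = ⊕_{n≥0} L_n be a graded ℂ-subalgebra of V_ν[t] (elements of L_n of the form f t^n with f ∈ V_ν), where ν is a valuation with residue field ℂ and value group (ℤ^d)_lex. Define S(L) = { (γ, n) ∈ ℤ^d × ℕ : ∃ f ∈ L_n with ν(f) = γ }. Then S(L) is a subsemigroup of ℤ^{d+1} and dim_ℂ L_n = #S(L)_n for every n ≥ 1, where S(L)_n = { γ : (γ, n) ∈ S(L) }. -/
noncomputable section

instance (priority := 10000) (d : ℕ) : WellFoundedLT (Fin d) := inferInstance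

/-- ℤ^d with the lexicographic order. -/
abbrev ZdLex (d : ℕ) := Lex (Fin d → ℤ)

/-- Given a graded ℂ-subalgebra L = ⊕ L_n of V_ν[t] (ν a valuation with residue field ℂ and
value group (ℤ^d)_lex), the set S(L) = {(γ,n) : ∃ f ∈ L_n, ν(f) = γ} is a subsemigroup of
ℤ^{d+1} and dim_ℂ L_n = #S(L)_n for every n ≥ 1. -/
theorem value_semigroup_of_graded_linear_series {K : Type} [Field K] [Algebra ℂ K]
    (d : ℕ) (ν : AddValuation K (WithTop (ZdLex d)))
    (hC0 : ∀ c : ℂ, c ≠ 0 → ν (algebraMap ℂ K c) = 0)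
    (hres : ∀ x : K, (0 : WithTop (ZdLex d)) ≤ ν x →
      ∃ c : ℂ, (0 : WithTop (ZdLex d)) < ν (x - algebraMap ℂ K c))
    (L : ℕ → Submodule ℂ K) (hfd : ∀ n, FiniteDimensional ℂ (L n))
    (hLV : ∀ n, ∀ f ∈ L n, (0 : WithTop (ZdLex d)) ≤ ν f)
    (hmul : ∀ m n : ℕ, ∀ f ∈ L m, ∀ g ∈ L n, f * g ∈ L (m + n)) :
    (∀ a ∈ {p : ZdLex d × ℕ | ∃ f ∈ L p.2, ν f = (p.1 : WithTop (ZdLex d))},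
     ∀ b ∈ {p : ZdLex d × ℕ | ∃ f ∈ L p.2, ν f = (p.1 : WithTop (ZdLex d))},
      a + b ∈ {p : ZdLex d × ℕ | ∃ f ∈ L p.2, ν f = (p.1 : WithTop (ZdLex d))}) ∧
    (∀ n : ℕ, 1 ≤ n →
      Module.finrank ℂ (L n)
        = Nat.card {γ : ZdLex d | ∃ f ∈ L n, ν f = (γ : WithTop (ZdLex d))}) := by
  classical
  have hne_top : ∀ x : K, x ≠ 0 → ν x ≠ ⊤ := fun x hx => (AddValuation.ne_top_iff ν).2 hx
  have hsmul : ∀ (c : ℂ) (f : K), c ≠ 0 → ν (c • f) = ν f := by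
    intro c f hc
    rw [Algebra.smul_def, ν.map_mul, hC0 c hc, zero_add]
  constructor
  · rintro ⟨γ, m⟩ ⟨f, hf, hνf⟩ ⟨δ, n⟩ ⟨g, hg, hνg⟩
    exact ⟨f * g, hmul m n f hf g hg, by rw [ν.map_mul, hνf, hνg, ← WithTop.coe_add]; rfl⟩
  · intro n _
    set S : Set (ZdLex d) := {γ | ∃ f ∈ L n, ν f = (γ : WithTop (ZdLex d))} with hS
    have hFex : ∀ γ : S, ∃ f, f ∈ L n ∧ ν f = ((γ : ZdLex d) : WithTop (ZdLex d)) := fun γ => γ.2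
    choose F hFL hFν using hFex
    have li : LinearIndependent ℂ F := by
      rw [linearIndependent_iff']
      intro s g hsum
      by_contra hcon
      push_neg at hcon
      obtain ⟨i, his, hgi⟩ := hcon
      set t := s.filter (fun j => g j ≠ 0) with ht
      have htne : t.Nonempty := ⟨i, Finset.mem_filter.2 ⟨his, hgi⟩⟩
      have hsum' : ∑ j ∈ t, g j • F j = 0 := by
        rw [← hsum]
        exact Finset.sum_filter_of_ne (fun j _ hne hg0 => hne (by rw [hg0, zero_smul]))
      have hval : ∀ j ∈ t, ν (g j • F j) = ((j : ZdLex d) : WithTop (ZdLex d)) := fun j hj => by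
        rw [hsmul _ _ (Finset.mem_filter.1 hj).2, hFν]
      obtain ⟨j₀, hj₀t, hj₀min⟩ := t.exists_min_image (fun j => ν (g j • F j)) htne
      have hrest : ν (g j₀ • F j₀) < ν (∑ j ∈ t.erase j₀, g j • F j) := by
        apply ν.map_lt_sum (by rw [hval j₀ hj₀t]; exact WithTop.coe_ne_top)
        intro j hj
        have hjt := Finset.mem_of_mem_erase hj
        rcases (hj₀min j hjt).lt_or_eq with h | h
        · exact h
        · exact absurd (Subtype.ext (WithTop.coe_injective
            (by rw [← hval j₀ hj₀t, ← hval j hjt, h]))) (Finset.ne_of_mem_erase hj)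
      have hνsum : ν (∑ j ∈ t, g j • F j) = ν (g j₀ • F j₀) := by
        rw [← Finset.add_sum_erase t _ hj₀t]
        exact ν.map_add_eq_of_lt_left hrest
      rw [hsum', ν.map_zero, hval j₀ hj₀t] at hνsum
      exact WithTop.coe_ne_top hνsum.symm
    set F' : S → L n := fun γ => ⟨F γ, hFL γ⟩ with hF'
    have li' : LinearIndependent ℂ F' :=
      LinearIndependent.of_comp (L n).subtype (by exact li)
    haveI : FiniteDimensional ℂ (L n) := hfd n
    haveI : Finite S := li'.finite
    haveI : Fintype S := Fintype.ofFinite _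
    have key : ∀ k : ℕ, ∀ f, f ∈ L n →
        (S.toFinset.filter (fun γ : ZdLex d => ν f < (γ : WithTop (ZdLex d)))).card ≤ k →
        f ∈ Submodule.span ℂ (Set.range F) := by
      intro k
      induction k using Nat.strong_induction_on with
      | _ k ih =>
      intro f hfL hcard
      by_cases hf0 : f = 0
      · rw [hf0]; exact Submodule.zero_mem _
      obtain ⟨γ, hγ⟩ := WithTop.ne_top_iff_exists.1 (hne_top f hf0)
      have hγS : γ ∈ S := ⟨f, hfL, hγ.symm⟩
      set g := F ⟨γ, hγS⟩ with hg
      have hgL : g ∈ L n := hFL _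
      have hgν : ν g = (γ : WithTop (ZdLex d)) := hFν _
      have hg0 : g ≠ 0 := by
        intro h
        rw [h, ν.map_zero] at hgν
        exact WithTop.coe_ne_top hgν.symm
      have hfg : ν (f / g) + (γ : WithTop (ZdLex d)) = (γ : WithTop (ZdLex d)) := by
        rw [← hgν, ← ν.map_mul, div_mul_cancel₀ f hg0, ← hγ, hgν]
      have hx0 : ν (f / g) = 0 := by
        rcases eq_or_ne (ν (f / g)) ⊤ with h | h
        · rw [h, top_add] at hfg
          exact absurd hfg.symm WithTop.coe_ne_top
        · obtain ⟨δ, hδ⟩ := WithTop.ne_top_iff_exists.1 h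
          rw [← hδ, ← WithTop.coe_add] at hfg
          have hδ0 := add_eq_right.1 (WithTop.coe_injective hfg)
          rw [← hδ, hδ0, WithTop.coe_zero]
      obtain ⟨c, hc⟩ := hres (f / g) (le_of_eq hx0.symm)
      have hf' : f - c • g = g * (f / g - algebraMap ℂ K c) := by
        rw [Algebra.smul_def, mul_sub, mul_comm g (f / g), div_mul_cancel₀ f hg0, mul_comm g]
      have hν' : (γ : WithTop (ZdLex d)) < ν (f - c • g) := by
        rw [hf', ν.map_mul, hgν]
        calc (γ : WithTop (ZdLex d)) = ↑γ + 0 := (add_zero _).symm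
          _ < ↑γ + ν (f / g - algebraMap ℂ K c) :=
            WithTop.add_lt_add_left WithTop.coe_ne_top hc
      have hgspan : g ∈ Submodule.span ℂ (Set.range F) :=
        Submodule.subset_span ⟨⟨γ, hγS⟩, rfl⟩
      by_cases hf'0 : f - c • g = 0
      · rw [sub_eq_zero] at hf'0
        rw [hf'0]
        exact Submodule.smul_mem _ _ hgspan
      · obtain ⟨γ', hγ'⟩ := WithTop.ne_top_iff_exists.1 (hne_top _ hf'0)
        have hγ'S : γ' ∈ S := ⟨f - c • g, Submodule.sub_mem _ hfL (Submodule.smul_mem _ _ hgL), hγ'.symm⟩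
        have hsub : (S.toFinset.filter (fun δ : ZdLex d => ν (f - c • g) < (δ : WithTop (ZdLex d)))) ⊆
            (S.toFinset.filter (fun δ : ZdLex d => ν f < (δ : WithTop (ZdLex d)))) := by
          intro δ hδ
          rw [Finset.mem_filter] at hδ ⊢
          exact ⟨hδ.1, lt_trans (by rw [← hγ]; exact hν') hδ.2⟩
        have hmem : γ' ∈ (S.toFinset.filter (fun δ : ZdLex d => ν f < (δ : WithTop (ZdLex d)))) := by
          rw [Finset.mem_filter, Set.mem_toFinset]
          exact ⟨hγ'S, by rw [← hγ, hγ']; exact (by rw [← hγ'] at hν' ⊢; exact hν')⟩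
        have hnmem : γ' ∉ (S.toFinset.filter (fun δ : ZdLex d => ν (f - c • g) < (δ : WithTop (ZdLex d)))) := by
          rw [Finset.mem_filter]
          rintro ⟨-, h⟩
          rw [← hγ'] at h
          exact lt_irrefl _ h
        have hcard' : (S.toFinset.filter (fun δ : ZdLex d => ν (f - c • g) < (δ : WithTop (ZdLex d)))).card <
            (S.toFinset.filter (fun δ : ZdLex d => ν f < (δ : WithTop (ZdLex d)))).card :=
          Finset.card_lt_card ((Finset.ssubset_iff_of_subset hsub).2 ⟨γ', hmem, hnmem⟩)
        have hspan' : f - c • g ∈ Submodule.span ℂ (Set.range F) :=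
          ih _ (lt_of_lt_of_le hcard' hcard) _
            (Submodule.sub_mem _ hfL (Submodule.smul_mem _ _ hgL)) le_rfl
        have : f = (f - c • g) + c • g := by ring
        rw [this]
        exact Submodule.add_mem _ hspan' (Submodule.smul_mem _ _ hgspan)
    have hspan : ⊤ ≤ Submodule.span ℂ (Set.range F') := by
      rintro ⟨f, hf⟩ -
      obtain ⟨c, hc⟩ := (Submodule.mem_span_range_iff_exists_fun ℂ).1 (key _ f hf le_rfl)
      apply (Submodule.mem_span_range_iff_exists_fun ℂ).2
      refine ⟨c, Subtype.ext ?_⟩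
      push_cast
      simpa [hF'] using hc
    have b : Module.Basis S ℂ (L n) := Module.Basis.mk li' hspan
    rw [Module.finrank_eq_card_basis b, Nat.card_eq_fintype_card]
end
end

section
/- Suppose (a_n)_{n≥0} is a sequence of nonnegative reals with a_n = dim_ℂ L_n for a graded linear series L, and suppose L decomposes via a filtration into graded linear series M⁰ = L ⊃ M¹ ⊃ ⋯ ⊃ M^s = 0 with dim_ℂ L_n = Σ_{i=1}^s dim_ℂ (M^{i-1}/M^i)_n for all n, where each quotient series N^i = M^{i-1}/M^i satisfies: either κ(N^i) < κ, or κ(N^i) = κ and lim_{n→∞} dim_ℂ N^i_{nm_i}/n^κ exists (with dim N^i_n = 0 when m_i ∤ n) for some positive integer m_i. Then, setting r = lcm{ m_i : κ(N^i) = κ }, for every fixed a ∈ ℕ the limit lim_{n→∞} dim_ℂ L_{a+nr} / n^κ exists. -/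
open Filter

private lemma ratio_pow_tendsto (κ b d : ℕ) (hd : 0 < d) :
    Tendsto (fun n : ℕ => ((b + n * d : ℕ) : ℝ) ^ κ / (n : ℝ) ^ κ) atTop
      (nhds ((d : ℝ) ^ κ)) := by
  have h0 : Tendsto (fun n : ℕ => (b : ℝ) / (n : ℝ) + (d : ℝ)) atTop (nhds ((d : ℝ))) := by
    simpa using (tendsto_const_div_atTop_nhds_zero_nat (b : ℝ)).add
      (tendsto_const_nhds (x := (d : ℝ)))
  have h1 := h0.pow κ
  refine h1.congr' ?_
  filter_upwards [eventually_ge_atTop 1] with n hn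
  have hn' : (n : ℝ) ≠ 0 := by positivity
  rw [← div_pow]
  congr 1
  push_cast
  field_simp

private lemma comp_arith_tendsto (κ b d : ℕ) (hd : 0 < d) (g : ℕ → ℝ) (c : ℝ)
    (hg : Tendsto (fun k : ℕ => g k / (k : ℝ) ^ κ) atTop (nhds c)) :
    Tendsto (fun n : ℕ => g (b + n * d) / (n : ℝ) ^ κ) atTop
      (nhds (c * (d : ℝ) ^ κ)) := by
  have hmono : Tendsto (fun n : ℕ => b + n * d) atTop atTop := by
    apply tendsto_atTop_mono (f := fun n : ℕ => n)
    · intro n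
      calc n ≤ n * d := Nat.le_mul_of_pos_right n hd
        _ ≤ b + n * d := Nat.le_add_left _ _
    · exact tendsto_id
  have h1 := hg.comp hmono
  have h2 := ratio_pow_tendsto κ b d hd
  have := h1.mul h2
  refine this.congr' ?_
  filter_upwards [eventually_ge_atTop 1] with n hn
  have hb : (1 : ℕ) ≤ b + n * d := le_trans (by nlinarith) (Nat.le_add_left _ _)
  have hA : ((b + n * d : ℕ) : ℝ) ^ κ ≠ 0 := by positivity
  simp only [Function.comp]
  rw [div_mul_div_comm, mul_comm (g (b + n * d)), mul_div_mul_left _ _ hA]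

/-- Suppose dim_ℂ L_n = Σ_{i} dim_ℂ N^i_n for graded pieces of quotients N^i of a filtration
of L, where each N^i either has dimension growth of lower order than n^κ, or is supported in
degrees divisible by some m_i ≥ 1 with dim N^i_{m_i n}/n^κ convergent. Then with r a common
multiple of the relevant m_i (e.g. their lcm), for every fixed a ∈ ℕ the limit
lim_n dim_ℂ L_{a+nr}/n^κ exists. -/
theorem filtration_arithmetic_limit (κ : ℕ) (s : ℕ) (A : ℕ → ℕ) (N : Fin s → ℕ → ℕ)
    (hA : ∀ n : ℕ, 1 ≤ n → A n = ∑ i : Fin s, N i n)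
    (m : Fin s → ℕ) (r : ℕ) (hr : 0 < r)
    (h : ∀ i : Fin s,
      (Tendsto (fun n : ℕ => (N i n : ℝ) / (n : ℝ) ^ κ) atTop (nhds 0)) ∨
      (0 < m i ∧ (∀ n : ℕ, ¬ m i ∣ n → N i n = 0) ∧
        (∃ c : ℝ, Tendsto (fun n : ℕ => (N i (m i * n) : ℝ) / (n : ℝ) ^ κ) atTop (nhds c)) ∧
        m i ∣ r)) :
    ∀ a : ℕ, ∃ ℓ : ℝ,
      Tendsto (fun n : ℕ => (A (a + n * r) : ℝ) / (n : ℝ) ^ κ) atTop (nhds ℓ) := by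
  intro a
  have key : ∀ i : Fin s, ∃ ℓi : ℝ,
      Tendsto (fun n : ℕ => (N i (a + n * r) : ℝ) / (n : ℝ) ^ κ) atTop (nhds ℓi) := by
    intro i
    rcases h i with h0 | ⟨hm, hsupp, ⟨c, hc⟩, hdvd⟩
    · exact ⟨0 * (r : ℝ) ^ κ,
        comp_arith_tendsto κ a r hr (fun k => (N i k : ℝ)) 0 h0⟩
    · by_cases hda : m i ∣ a
      · obtain ⟨a', ha'⟩ := hda
        obtain ⟨r', hr'⟩ := hdvd
        have hr'pos : 0 < r' := by
          rcases Nat.eq_zero_or_pos r' with h0 | h0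
          · rw [h0, Nat.mul_zero] at hr'; omega
          · exact h0
        refine ⟨c * (r' : ℝ) ^ κ, ?_⟩
        have := comp_arith_tendsto κ a' r' hr'pos (fun k => (N i (m i * k) : ℝ)) c hc
        refine this.congr ?_
        intro n
        congr 2
        rw [ha', hr']
        ring
      · refine ⟨0, ?_⟩
        have : ∀ n : ℕ, (N i (a + n * r) : ℝ) / (n : ℝ) ^ κ = 0 := by
          intro n
          have : ¬ m i ∣ a + n * r := by
            intro hd
            exact hda ((Nat.dvd_add_right (hdvd.mul_left n)).mp
              (by rwa [Nat.add_comm] at hd))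
          rw [hsupp _ this]
          simp
        simpa [this] using tendsto_const_nhds (x := (0 : ℝ))
  choose ℓ hℓ using key
  refine ⟨∑ i : Fin s, ℓ i, ?_⟩
  have hsum := tendsto_finset_sum (Finset.univ : Finset (Fin s))
    (fun i _ => hℓ i)
  refine hsum.congr' ?_
  filter_upwards [eventually_ge_atTop 1] with n hn
  have h1 : 1 ≤ a + n * r := le_trans (by nlinarith) (Nat.le_add_left _ _)
  rw [hA _ h1]
  push_cast
  rw [Finset.sum_div]
end

section
/- Let L = ⊕_{n≥0} L_n be a graded ℂ-algebra with each L_n finite-dimensional, L_0 = ℂ, and suppose there is an injective graded ℂ-algebra homomorphism L → ⊕_{i=1}^s L^i into a finite direct sum of graded linear series L^i, with dim_ℂ L_n ≤ Σ_i dim_ℂ L^i_n. Define σ(L) as the maximal number of algebraically independent homogeneous elements of positive degree. Then σ(L) = max_i σ(image of L in L^i). -/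
noncomputable section

/-- Let L be a graded ℂ-algebra with finite-dimensional graded pieces, L₀ = ℂ, embedded by a
graded injective ℂ-algebra homomorphism into a finite direct sum of graded ℂ-algebras L^i.
Then σ(L) (the maximal number of algebraically independent homogeneous elements of positive
degree) equals the maximum over i of σ of the image of L in L^i. -/
theorem sigma_eq_max_of_components
    (A : Type) [CommRing A] [Algebra ℂ A] (𝒜 : ℕ → Submodule ℂ A) [GradedAlgebra 𝒜]
    (hfd : ∀ n, FiniteDimensional ℂ (𝒜 n)) (h0 : 𝒜 0 = (1 : Submodule ℂ A))
    (s : ℕ) (hs : 0 < s)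
    (B : Fin s → Type) [∀ i, CommRing (B i)] [∀ i, Algebra ℂ (B i)]
    (ℬ : ∀ i, ℕ → Submodule ℂ (B i)) [∀ i, GradedAlgebra (ℬ i)]
    (hfdB : ∀ i n, FiniteDimensional ℂ (ℬ i n)) (h0B : ∀ i, ℬ i 0 = (1 : Submodule ℂ (B i)))
    (φ : ∀ i, A →ₐ[ℂ] B i)
    (hgr : ∀ i n, ∀ x ∈ 𝒜 n, φ i x ∈ ℬ i n)
    (hinj : ∀ x : A, (∀ i, φ i x = 0) → x = 0) :
    sSup {n : ℕ∞ | ∃ m : ℕ, n = (m : ℕ∞) ∧ ∃ y : Fin m → A,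
        (∀ j, ∃ k : ℕ, 0 < k ∧ y j ∈ 𝒜 k) ∧ AlgebraicIndependent ℂ y}
      = ⨆ i : Fin s,
        sSup {n : ℕ∞ | ∃ m : ℕ, n = (m : ℕ∞) ∧ ∃ y : Fin m → A,
          (∀ j, ∃ k : ℕ, 0 < k ∧ y j ∈ 𝒜 k) ∧
          AlgebraicIndependent ℂ (fun j => φ i (y j))} := by
  apply le_antisymm
  · apply sSup_le
    rintro n ⟨m, rfl, y, hy, hind⟩
    have key : ∃ i, AlgebraicIndependent ℂ (fun j => φ i (y j)) := by
      by_contra h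
      push_neg at h
      have hp : ∀ i, ∃ p : MvPolynomial (Fin m) ℂ, p ≠ 0 ∧
          MvPolynomial.aeval (fun j => φ i (y j)) p = 0 := by
        intro i
        have hni := h i
        rw [AlgebraicIndependent, injective_iff_map_eq_zero] at hni
        push_neg at hni
        obtain ⟨p, hp1, hp2⟩ := hni
        exact ⟨p, hp2, hp1⟩
      choose p hp0 hpz using hp
      have hq0 : (∏ i, p i) ≠ 0 := Finset.prod_ne_zero_iff.mpr fun i _ => hp0 i
      have hqz : MvPolynomial.aeval y (∏ i, p i) = 0 := by
        apply hinj
        intro i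
        rw [MvPolynomial.comp_aeval_apply, map_prod]
        exact Finset.prod_eq_zero (Finset.mem_univ i) (hpz i)
      exact hq0 (hind (show MvPolynomial.aeval y (∏ i, p i) = MvPolynomial.aeval y 0 by
        rw [hqz, map_zero]))
    obtain ⟨i, hi⟩ := key
    exact le_iSup_of_le i (le_sSup ⟨m, rfl, y, hy, hi⟩)
  · apply iSup_le
    intro i
    apply sSup_le
    rintro n ⟨m, rfl, y, hy, hind⟩
    exact le_sSup ⟨m, rfl, y, hy, AlgebraicIndependent.of_comp (φ i) hind⟩
end
end

section
/- Let L = ⊕_{n≥0} L_n be a graded ℂ-algebra with L_0 = ℂ, all L_n finite-dimensional, and suppose there exists a constant γ > 0 and integer a ≥ 0 with dim_ℂ L_n < γ n^a for all n ≥ 1. If κ(L) ≥ 0 (i.e., some L_n ≠ 0 for n > 0), then there exist a positive constant α and a positive integer e such that dim_ℂ L_{en} > α n^{κ(L)} for all positive integers n, where κ(L) = σ(L) − 1 and σ(L) is the maximal number of algebraically independent homogeneous elements of positive degree. -/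
noncomputable section

/-- σ(L) for a graded algebra, as an extended natural. -/
def sigmaGr (A : Type*) [CommRing A] [Algebra ℂ A] (𝒜 : ℕ → Submodule ℂ A) : ℕ∞ :=
  sSup {n : ℕ∞ | ∃ m : ℕ, n = (m : ℕ∞) ∧ ∃ y : Fin m → A,
    (∀ j, ∃ k : ℕ, 0 < k ∧ y j ∈ 𝒜 k) ∧ AlgebraicIndependent ℂ y}

/-- the Kodaira-Iitaka dimension of a graded linear series with σ(L) > 0, namely σ(L) − 1. -/
def kappaGr (A : Type*) [CommRing A] [Algebra ℂ A] (𝒜 : ℕ → Submodule ℂ A) : ℕ∞ :=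
  sigmaGr A 𝒜 - 1

/-- Monomials in an algebraically independent family, with injectively chosen exponent
vectors, are linearly independent. -/
lemma linind_monomials {A : Type*} [CommRing A] [Algebra ℂ A]
    {m : ℕ} {y : Fin m → A} (hy : AlgebraicIndependent ℂ y)
    {ι : Type*} (E : ι → (Fin m → ℕ)) (hE : Function.Injective E) :
    LinearIndependent ℂ (fun i => ∏ j, y j ^ E i j) := by
  classical
  set E' : ι → (Fin m →₀ ℕ) := fun i => Finsupp.equivFunOnFinite.symm (E i) with hE'def
  have hE' : Function.Injective E' := Finsupp.equivFunOnFinite.symm.injective.comp hE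
  have h1 : LinearIndependent ℂ (fun i => (MvPolynomial.monomial (E' i) (1 : ℂ))) := by
    have := (MvPolynomial.basisMonomials (Fin m) ℂ).linearIndependent.comp E' hE'
    exact this
  have h2 := h1.map' (MvPolynomial.aeval y).toLinearMap
    (LinearMap.ker_eq_bot.mpr hy)
  have h3 : (fun i => (MvPolynomial.aeval y).toLinearMap (MvPolynomial.monomial (E' i) (1 : ℂ)))
      = fun i => ∏ j, y j ^ E i j := by
    funext i
    simp only [AlgHom.toLinearMap_apply, MvPolynomial.aeval_monomial, map_one, one_mul]
    rw [Finsupp.prod_fintype _ _ (fun j => pow_zero (y j))]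
    refine Finset.prod_congr rfl fun j _ => ?_
    simp [hE'def]
  rw [Function.comp_def, h3] at h2
  exact h2

/-- Suppose L is a graded ℂ-algebra with L₀ = ℂ, finite-dimensional graded pieces, and
dim_ℂ L_n < γ n^a for all n ≥ 1. If κ(L) ≥ 0 (i.e. σ(L) ≥ 1), then there are α > 0 and a
positive integer e with dim_ℂ L_{en} > α n^{κ(L)} for all n ≥ 1. -/
theorem lower_growth_bound
    (A : Type) [CommRing A] [Algebra ℂ A] (𝒜 : ℕ → Submodule ℂ A) [GradedAlgebra 𝒜]
    (hfd : ∀ n, FiniteDimensional ℂ (𝒜 n)) (h0 : 𝒜 0 = (1 : Submodule ℂ A))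
    (γ : ℝ) (hγ : 0 < γ) (a : ℕ)
    (hup : ∀ n : ℕ, 1 ≤ n → (Module.finrank ℂ (𝒜 n) : ℝ) < γ * (n : ℝ) ^ a)
    (hκ : 1 ≤ sigmaGr A 𝒜) (κ : ℕ) (hκval : (κ : ℕ∞) = kappaGr A 𝒜) :
    ∃ α : ℝ, 0 < α ∧ ∃ e : ℕ, 0 < e ∧
      ∀ n : ℕ, 0 < n → α * (n : ℝ) ^ κ < (Module.finrank ℂ (𝒜 (e * n)) : ℝ) := by
  classical
  set S : Set ℕ∞ := {n : ℕ∞ | ∃ m : ℕ, n = (m : ℕ∞) ∧ ∃ y : Fin m → A,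
    (∀ j, ∃ k : ℕ, 0 < k ∧ y j ∈ 𝒜 k) ∧ AlgebraicIndependent ℂ y} with hSdef
  have hsig : sigmaGr A 𝒜 = ((κ + 1 : ℕ) : ℕ∞) := by
    have h1 : sigmaGr A 𝒜 - 1 + 1 = sigmaGr A 𝒜 := tsub_add_cancel_of_le hκ
    rw [← h1, ← kappaGr, ← hκval]
    push_cast
    rfl
  have hsSup : sSup S = ((κ + 1 : ℕ) : ℕ∞) := hsig
  -- the sup is attained
  have hmem : ((κ + 1 : ℕ) : ℕ∞) ∈ S := by
    by_contra hcon
    have hle : sSup S ≤ (κ : ℕ∞) := by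
      apply sSup_le
      rintro b hb
      obtain ⟨m, rfl, hrest⟩ := hb
      have h1 : (m : ℕ∞) ≤ ((κ + 1 : ℕ) : ℕ∞) := hsSup ▸ le_sSup ⟨m, rfl, hrest⟩
      have h2 : m ≠ κ + 1 := by
        intro he
        subst he
        exact hcon ⟨_, rfl, hrest⟩
      have : m ≤ κ := by
        have := Nat.cast_le.mp h1
        omega
      exact_mod_cast this
    rw [hsSup] at hle
    have : κ + 1 ≤ κ := Nat.cast_le.mp hle
    omega
  obtain ⟨m, hm, y, hy, hyind⟩ := hmem
  have hmeq : κ + 1 = m := Nat.cast_injective hm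
  subst hmeq
  choose k hkpos hky using hy
  set e : ℕ := ∏ j, k j with hedef
  have he : 0 < e := Finset.prod_pos fun j _ => hkpos j
  have hdvd : ∀ j, k j ∣ e := fun j => Finset.dvd_prod_of_mem k (Finset.mem_univ j)
  have hquotpos : ∀ j, 0 < e / k j := fun j =>
    Nat.div_pos (Nat.le_of_dvd he (hdvd j)) (hkpos j)
  refine ⟨1 / (2 * ((κ : ℝ) + 1) ^ κ), by positivity, e, he, fun n hn => ?_⟩
  set q : ℕ := n / (κ + 1) + 1 with hqdef
  -- exponent vectors
  set E : (Fin κ → Fin q) → (Fin (κ + 1) → ℕ) := fun d i =>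
    (e / k i) * (Fin.snoc (fun j : Fin κ => (d j : ℕ)) (n - ∑ j, (d j : ℕ)) : Fin (κ + 1) → ℕ) i with hEdef
  have hSle : ∀ d : Fin κ → Fin q, (∑ j, (d j : ℕ)) ≤ n := by
    intro d
    have h1 : (∑ j, (d j : ℕ)) ≤ ∑ _j : Fin κ, n / (κ + 1) := by
      apply Finset.sum_le_sum
      intro j _
      have := (d j).isLt
      omega
    have h2 : ∑ _j : Fin κ, n / (κ + 1) = κ * (n / (κ + 1)) := by
      simp [Finset.sum_const, mul_comm]
    calc (∑ j, (d j : ℕ)) ≤ κ * (n / (κ + 1)) := h2 ▸ h1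
      _ ≤ (κ + 1) * (n / (κ + 1)) := Nat.mul_le_mul_right _ (by omega)
      _ ≤ n := Nat.mul_div_le n (κ + 1)
  have hEinj : Function.Injective E := by
    intro d d' hdd
    funext j
    have := congrFun hdd j.castSucc
    simp only [hEdef, Fin.snoc_castSucc] at this
    have hq := hquotpos j.castSucc
    have : (d j : ℕ) = (d' j : ℕ) := by
      exact Nat.eq_of_mul_eq_mul_left hq this
    exact Fin.ext this
  -- the monomials
  have hmemA : ∀ d : Fin κ → Fin q, (∏ j, y j ^ E d j) ∈ 𝒜 (e * n) := by
    intro d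
    have h1 : (∏ j, y j ^ E d j) ∈ 𝒜 (∑ j, E d j • k j) :=
      SetLike.prod_pow_mem_graded 𝒜 k y (E d) fun j _ => hky j
    have h2 : (∑ j, E d j • k j) = e * n := by
      have hterm : ∀ j, E d j • k j =
          e * (Fin.snoc (fun j : Fin κ => (d j : ℕ)) (n - ∑ j, (d j : ℕ)) : Fin (κ + 1) → ℕ) j := by
        intro j
        simp only [hEdef, smul_eq_mul]
        rw [mul_comm, ← mul_assoc, Nat.mul_div_cancel' (hdvd j)]
      rw [Finset.sum_congr rfl fun j _ => hterm j, ← Finset.mul_sum]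
      congr 1
      rw [Fin.sum_univ_castSucc]
      simp only [Fin.snoc_castSucc, Fin.snoc_last]
      have := hSle d
      omega
    rwa [h2] at h1
  set W : (Fin κ → Fin q) → 𝒜 (e * n) := fun d => ⟨∏ j, y j ^ E d j, hmemA d⟩ with hWdef
  have hWli : LinearIndependent ℂ W := by
    apply LinearIndependent.of_comp (𝒜 (e * n)).subtype
    have : ((𝒜 (e * n)).subtype ∘ W) = fun d => ∏ j, y j ^ E d j := rfl
    rw [this]
    exact linind_monomials hyind E hEinj
  have hcard : q ^ κ ≤ Module.finrank ℂ (𝒜 (e * n)) := by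
    have := hWli.fintype_card_le_finrank
    rwa [Fintype.card_fun, Fintype.card_fin, Fintype.card_fin] at this
  -- real arithmetic
  have hqreal : (n : ℝ) < (q : ℝ) * ((κ : ℝ) + 1) := by
    have h1 := Nat.div_add_mod n (κ + 1)
    have h2 : n % (κ + 1) < κ + 1 := Nat.mod_lt n (by omega)
    have h3 : n < q * (κ + 1) := by
      calc n = (κ + 1) * (n / (κ + 1)) + n % (κ + 1) := h1.symm
        _ < (κ + 1) * (n / (κ + 1)) + (κ + 1) := Nat.add_lt_add_left h2 _
        _ = q * (κ + 1) := by rw [hqdef]; ring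
    have := (Nat.cast_lt (α := ℝ)).mpr h3
    push_cast at this ⊢
    linarith
  have hκ1pos : (0 : ℝ) < (κ : ℝ) + 1 := by positivity
  have hqpos : (0 : ℝ) < (q : ℝ) := by positivity
  have hnpos : (0 : ℝ) < (n : ℝ) := by exact_mod_cast hn
  have key : (n : ℝ) ^ κ / ((κ : ℝ) + 1) ^ κ ≤ (q : ℝ) ^ κ := by
    rw [← div_pow]
    apply pow_le_pow_left₀ (by positivity)
    rw [div_le_iff₀ hκ1pos]
    linarith
  have hfin : ((q : ℝ)) ^ κ ≤ (Module.finrank ℂ (𝒜 (e * n)) : ℝ) := by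
    exact_mod_cast hcard
  have hqκpos : (0 : ℝ) < (q : ℝ) ^ κ := by positivity
  calc 1 / (2 * ((κ : ℝ) + 1) ^ κ) * (n : ℝ) ^ κ
      = (1 / 2) * ((n : ℝ) ^ κ / ((κ : ℝ) + 1) ^ κ) := by
        field_simp
    _ ≤ (1 / 2) * (q : ℝ) ^ κ := by linarith
    _ < (q : ℝ) ^ κ := by linarith
    _ ≤ _ := hfin
end
end
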